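/- In a unital complex Banach algebra A, the identity element 1 is not a commutator: there exist no a, b ∈ A with ab - ba = 1. -/

import Mathlib

open scoped Pointwise

theorem stmt4 {A : Type*} [NormedRing A] [NormedAlgebra ℂ A] [CompleteSpace A]
    [Nontrivial A] :
    ¬ ∃ a b : A, a * b - b * a = 1 := by
  rintro ⟨a, b, hab⟩
  have hab' : a * b = algebraMap ℂ A 1 + b * a := by
    rw [map_one]; exact sub_eq_iff_eq_add.mp hab
  set S := spectrum ℂ (b * a) with hS
  have hne : S.Nonempty := spectrum.nonempty (b * a)
  have hcomp : IsCompact S := spectrum.isCompact (b * a)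
  -- σ(a*b) = {1} + S
  have hσ : spectrum ℂ (a * b) = ({(1:ℂ)} : Set ℂ) + S := by
    rw [hab', ← spectrum.singleton_add_eq]
  have hmem : ∀ z : ℂ, z ∈ spectrum ℂ (a * b) ↔ z - 1 ∈ S := by
    intro z
    rw [hσ]
    constructor
    · rintro ⟨x, hx, y, hy, rfl⟩
      simp only [Set.mem_singleton_iff] at hx
      subst hx; simpa using hy
    · intro h; exact ⟨1, rfl, z - 1, h, by ring⟩
  -- swap lemma for nonzero elements
  have hswap : ∀ z : ℂ, z ≠ 0 → (z ∈ spectrum ℂ (a * b) ↔ z ∈ S) := by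
    intro z hz
    lift z to ℂˣ using Ne.isUnit hz
    exact spectrum.unit_mem_mul_comm
  have h1 : ∀ z ∈ S, z + 1 = 0 ∨ z + 1 ∈ S := by
    intro z hz
    rcases eq_or_ne (z + 1) 0 with h | h
    · exact Or.inl h
    · right
      have : z + 1 ∈ spectrum ℂ (a * b) := (hmem _).mpr (by simpa using hz)
      exact (hswap _ h).mp this
  have h2 : ∀ z ∈ S, z = 0 ∨ z - 1 ∈ S := by
    intro z hz
    rcases eq_or_ne z 0 with h | h
    · exact Or.inl h
    · right
      exact (hmem z).mp ((hswap z h).mpr hz)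
  -- max of real part
  obtain ⟨zM, hzM, hMax⟩ := hcomp.exists_isMaxOn hne (Complex.continuous_re.continuousOn)
  obtain ⟨zm, hzm, hMin⟩ := hcomp.exists_isMinOn hne (Complex.continuous_re.continuousOn)
  have hzM1 : zM + 1 = 0 := by
    rcases h1 zM hzM with h | h
    · exact h
    · exfalso
      have := hMax h
      simp only [Set.mem_setOf_eq, Complex.add_re, Complex.one_re] at this
      linarith
  have hzm0 : zm = 0 := by
    rcases h2 zm hzm with h | h
    · exact h
    · exfalso
      have := hMin h
      simp only [Set.mem_setOf_eq, Complex.sub_re, Complex.one_re] at this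
      linarith
  have := hMax hzm
  rw [hzm0] at this
  have h' : zM.re = -1 := by
    have := congrArg Complex.re hzM1
    simp only [Complex.add_re, Complex.one_re, Complex.zero_re] at this
    linarith
  simp only [Set.mem_setOf_eq, Complex.zero_re, h'] at this
  linarith
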